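/- arXiv:1309.1578 — 6 statements merged into one kernel-verified Lean document; each statement's English description precedes it below -/
import Mathlib

section
/- For integers n > m ≥ 2, the function γ_{m,n}(u) = (1/(n−m)) Σ_{k=m+1}^{n} [ (k/i)·φ′_{Z_k}(ku)/φ_{Z_k}(ku) − e^{iuk} ] satisfies sup_{−π ≤ u ≤ π} |γ_{m,n}(u)| ≤ C (1 + log(n/m))/(n−m) for an absolute constant C, where φ_{Z_k}(t) = 1 + (e^{it}−1)/k. -/
/-- The characteristic function of the Bernoulli variable `Z_k` with `P(Z_k = 1) = 1/k`. -/
noncomputable def phiZ (k : ℕ) (t : ℝ) : ℂ := 1 + (Complex.exp (Complex.I * t) - 1) / k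

lemma phiZ_hasDerivAt (k : ℕ) (t : ℝ) :
    HasDerivAt (phiZ k) (Complex.I * Complex.exp (Complex.I * t) / k) t := by
  have h0 : HasDerivAt (fun t : ℝ => (t : ℂ)) 1 t := (hasDerivAt_id t).ofReal_comp
  have h1 : HasDerivAt (fun t : ℝ => Complex.I * (t : ℂ)) Complex.I t := by
    simpa using h0.const_mul Complex.I
  have h2 : HasDerivAt (fun t : ℝ => Complex.exp (Complex.I * t))
      (Complex.exp (Complex.I * t) * Complex.I) t := h1.cexp
  have h3 := ((h2.sub_const 1).div_const (k:ℂ)).const_add 1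
  exact h3.congr_deriv (by ring)

lemma norm_exp_I_mul (t : ℝ) : ‖Complex.exp (Complex.I * t)‖ = 1 := by
  rw [Complex.norm_exp]
  simp

lemma norm_exp_sub_one_le (t : ℝ) : ‖Complex.exp (Complex.I * t) - 1‖ ≤ 2 := by
  calc ‖Complex.exp (Complex.I * t) - 1‖ ≤ ‖Complex.exp (Complex.I * (t:ℂ))‖ + ‖(1:ℂ)‖ :=
        norm_sub_le _ _
    _ ≤ 2 := by rw [norm_exp_I_mul]; norm_num

lemma phiZ_norm_ge (k : ℕ) (hk : 3 ≤ k) (t : ℝ) : (1:ℝ)/3 ≤ ‖phiZ k t‖ := by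
  have hk' : (3:ℝ) ≤ k := by exact_mod_cast hk
  have hkpos : (0:ℝ) < k := by linarith
  have h2 : ‖(Complex.exp (Complex.I * t) - 1) / k‖ ≤ 2 / k := by
    rw [norm_div, Complex.norm_natCast]
    gcongr
    exact norm_exp_sub_one_le t
  have h3 : (2:ℝ)/k ≤ 2/3 := by
    apply div_le_div_of_nonneg_left (by norm_num) (by norm_num) hk'
  have h4 : ‖(1:ℂ)‖ - ‖phiZ k t‖ ≤ 2/3 := by
    calc ‖(1:ℂ)‖ - ‖phiZ k t‖ ≤ ‖(1:ℂ) - phiZ k t‖ := norm_sub_norm_le _ _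
      _ = ‖(Complex.exp (Complex.I * t) - 1) / k‖ := by
          rw [phiZ, show (1:ℂ) - (1 + (Complex.exp (Complex.I * t) - 1) / k)
            = -((Complex.exp (Complex.I * t) - 1) / k) by ring, norm_neg]
      _ ≤ 2/3 := h2.trans h3
  simp only [norm_one] at h4
  linarith

lemma term_bound (k : ℕ) (hk : 3 ≤ k) (u : ℝ) :
    ‖((k : ℂ) / Complex.I) * deriv (phiZ k) ((k : ℝ) * u) / phiZ k ((k : ℝ) * u)
      - Complex.exp (Complex.I * (u * k))‖ ≤ 6 / k := by
  have hkC : ((k:ℂ)) ≠ 0 := by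
    exact_mod_cast Nat.cast_ne_zero.mpr (by omega)
  have hknorm : (1:ℝ)/3 ≤ ‖phiZ k ((k:ℝ) * u)‖ := phiZ_norm_ge k hk _
  have hφ : phiZ k ((k:ℝ) * u) ≠ 0 := by
    intro h
    rw [h, norm_zero] at hknorm
    norm_num at hknorm
  have hd : deriv (phiZ k) ((k:ℝ) * u)
      = Complex.I * Complex.exp (Complex.I * ((k:ℝ) * u : ℝ)) / k :=
    (phiZ_hasDerivAt k _).deriv
  set e : ℂ := Complex.exp (Complex.I * ((k:ℝ) * u : ℝ)) with he
  have hexp : Complex.exp (Complex.I * (u * (k:ℂ))) = e := by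
    rw [he]
    congr 1
    push_cast
    ring
  have heq : ((k : ℂ) / Complex.I) * deriv (phiZ k) ((k : ℝ) * u) / phiZ k ((k : ℝ) * u)
      - Complex.exp (Complex.I * (u * k))
      = -(e * (e - 1)) / (k * phiZ k ((k:ℝ) * u)) := by
    rw [hd, hexp]
    have hA : ((k:ℂ)/Complex.I) * (Complex.I * e / k) = e := by
      field_simp
    rw [hA, div_sub' hφ, div_eq_div_iff hφ (mul_ne_zero hkC hφ)]
    have hφ' : phiZ k ((k:ℝ) * u) = 1 + (e - 1) / k := rfl
    rw [hφ']
    field_simp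
    ring
  rw [heq]
  have h1 : ‖-(e * (e - 1)) / ((k:ℂ) * phiZ k ((k:ℝ) * u))‖
      = ‖e - 1‖ / ((k:ℝ) * ‖phiZ k ((k:ℝ) * u)‖) := by
    rw [norm_div, norm_neg, norm_mul, norm_mul, Complex.norm_natCast, he, norm_exp_I_mul,
      one_mul]
  rw [h1]
  have hkpos : (0:ℝ) < k := by
    have : (3:ℝ) ≤ k := by exact_mod_cast hk
    linarith
  calc ‖e - 1‖ / ((k:ℝ) * ‖phiZ k ((k:ℝ) * u)‖) ≤ 2 / ((k:ℝ) * (1/3)) :=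
        div_le_div₀ (by norm_num) (norm_exp_sub_one_le _)
          (mul_pos hkpos (by norm_num))
          (mul_le_mul_of_nonneg_left hknorm hkpos.le)
    _ = 6 / k := by
        rw [div_eq_div_iff (mul_pos hkpos (by norm_num)).ne' hkpos.ne']
        ring

theorem gamma_mn_sup_bound :
    ∃ C : ℝ, 0 < C ∧ ∀ m n : ℕ, 2 ≤ m → m < n →
      ∀ u ∈ Set.Icc (-Real.pi) Real.pi,
        ‖(1 / ((n : ℂ) - m)) * ∑ k ∈ Finset.Icc (m + 1) n,
            (((k : ℂ) / Complex.I) * deriv (phiZ k) ((k : ℝ) * u) / phiZ k ((k : ℝ) * u)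
              - Complex.exp (Complex.I * (u * k)))‖
          ≤ C * (1 + Real.log ((n : ℝ) / m)) / ((n : ℝ) - m) := by
  refine ⟨6, by norm_num, fun m n hm hmn u _ => ?_⟩
  have hmn' : (m:ℝ) < n := by exact_mod_cast hmn
  have hm0 : (0:ℝ) < m := by
    have : 0 < m := by omega
    exact_mod_cast this
  have hn0 : (0:ℝ) < n := lt_trans hm0 hmn'
  have hnm : (0:ℝ) < (n:ℝ) - m := by linarith
  -- norm of the prefactor
  have hpre : ‖(1 / ((n : ℂ) - m))‖ = 1 / ((n:ℝ) - m) := by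
    have : ((n : ℂ) - m) = (((n:ℝ) - m : ℝ) : ℂ) := by push_cast; ring
    rw [this, norm_div, norm_one, Complex.norm_real, Real.norm_of_nonneg hnm.le]
  -- bound the sum termwise
  have hsum1 : ‖∑ k ∈ Finset.Icc (m + 1) n,
      (((k : ℂ) / Complex.I) * deriv (phiZ k) ((k : ℝ) * u) / phiZ k ((k : ℝ) * u)
        - Complex.exp (Complex.I * (u * k)))‖
      ≤ ∑ k ∈ Finset.Icc (m + 1) n, 6 / (k:ℝ) := by
    refine (norm_sum_le _ _).trans (Finset.sum_le_sum fun k hk => ?_)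
    have hk3 : 3 ≤ k := by
      rw [Finset.mem_Icc] at hk
      omega
    exact term_bound k hk3 u
  -- harmonic sum bound
  have hharm : ∑ k ∈ Finset.Icc (m + 1) n, ((k:ℝ))⁻¹
      = (harmonic n : ℝ) - (harmonic m : ℝ) := by
    have h0n : Finset.Icc 1 n = Finset.Ioc 0 n := Finset.Icc_add_one_left_eq_Ioc 0 n
    have h0m : Finset.Icc 1 m = Finset.Ioc 0 m := Finset.Icc_add_one_left_eq_Ioc 0 m
    have hmn2 : Finset.Icc (m+1) n = Finset.Ioc m n := Finset.Icc_add_one_left_eq_Ioc m n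
    have hc : (∑ i ∈ Finset.Ioc 0 m, ((i:ℝ))⁻¹) + ∑ i ∈ Finset.Ioc m n, ((i:ℝ))⁻¹
        = ∑ i ∈ Finset.Ioc 0 n, ((i:ℝ))⁻¹ :=
      Finset.sum_Ioc_consecutive _ (Nat.zero_le m) hmn.le
    have hn' : (harmonic n : ℝ) = ∑ i ∈ Finset.Ioc 0 n, ((i:ℝ))⁻¹ := by
      rw [harmonic_eq_sum_Icc]
      push_cast
      rw [h0n]
    have hm' : (harmonic m : ℝ) = ∑ i ∈ Finset.Ioc 0 m, ((i:ℝ))⁻¹ := by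
      rw [harmonic_eq_sum_Icc]
      push_cast
      rw [h0m]
    rw [hmn2, hn', hm', ← hc]
    ring
  have hlog : ∑ k ∈ Finset.Icc (m + 1) n, ((k:ℝ))⁻¹ ≤ 1 + Real.log ((n:ℝ) / m) := by
    rw [hharm, Real.log_div hn0.ne' hm0.ne']
    have h1 := harmonic_le_one_add_log n
    have h2 : Real.log (m:ℝ) ≤ (harmonic m : ℝ) := by
      refine le_trans ?_ (log_add_one_le_harmonic m)
      have : ((m:ℝ)) ≤ ((m+1 : ℕ):ℝ) := by push_cast; linarith
      exact Real.log_le_log hm0 this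
    linarith
  have hsum2 : ∑ k ∈ Finset.Icc (m + 1) n, 6 / (k:ℝ)
      ≤ 6 * (1 + Real.log ((n:ℝ) / m)) := by
    have : ∑ k ∈ Finset.Icc (m + 1) n, 6 / (k:ℝ)
        = 6 * ∑ k ∈ Finset.Icc (m + 1) n, ((k:ℝ))⁻¹ := by
      rw [Finset.mul_sum]
      exact Finset.sum_congr rfl fun k _ => by rw [div_eq_mul_inv]
    rw [this]
    nlinarith [hlog]
  rw [norm_mul, hpre]
  calc (1 / ((n:ℝ) - m)) * ‖∑ k ∈ Finset.Icc (m + 1) n,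
      (((k : ℂ) / Complex.I) * deriv (phiZ k) ((k : ℝ) * u) / phiZ k ((k : ℝ) * u)
        - Complex.exp (Complex.I * (u * k)))‖
      ≤ (1 / ((n:ℝ) - m)) * (6 * (1 + Real.log ((n:ℝ) / m))) := by
        apply mul_le_mul_of_nonneg_left (hsum1.trans hsum2)
        positivity
    _ = 6 * (1 + Real.log ((n:ℝ) / m)) / ((n:ℝ) - m) := by
        field_simp
end

section
/- For all real t and x, the function η_t(x) = (e^{itx} − 1)/x (extended by η_t(0) = it) satisfies |η′_t(x)| ≤ t²/2 for all x ∈ ℝ. -/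
open Complex MeasureTheory intervalIntegral Metric

lemma ofReal_hasDerivAt (u : ℝ) : HasDerivAt (fun v : ℝ => (v : ℂ)) 1 u :=
  Complex.ofRealCLM.hasDerivAt

lemma inner_hasDerivAt (c : ℂ) (u : ℝ) :
    HasDerivAt (fun v : ℝ => Complex.exp (c * v)) (c * Complex.exp (c * u)) u := by
  have h : HasDerivAt (fun v : ℝ => c * (v : ℂ)) c u := by
    simpa using (ofReal_hasDerivAt u).const_mul c
  simpa [mul_comm] using h.cexp

lemma eta_eq (t y : ℝ) :
    (if y = 0 then Complex.I * t else (Complex.exp (Complex.I * t * y) - 1) / y)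
      = ∫ u in (0:ℝ)..t, Complex.I * Complex.exp (Complex.I * u * y) := by
  by_cases hy : y = 0
  · simp [hy, mul_comm]
  · rw [if_neg hy]
    have hder : ∀ u ∈ Set.uIcc (0:ℝ) t,
        HasDerivAt (fun v : ℝ => Complex.exp (Complex.I * y * v) / y)
          (Complex.I * Complex.exp (Complex.I * u * y)) u := by
      intro u _
      have h := (inner_hasDerivAt (Complex.I * y) u).div_const (y : ℂ)
      have hy' : (y : ℂ) ≠ 0 := by exact_mod_cast hy
      have : Complex.I * (y : ℂ) * Complex.exp (Complex.I * y * u) / y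
          = Complex.I * Complex.exp (Complex.I * u * y) := by
        field_simp
      rw [this] at h
      simpa [mul_comm, mul_left_comm, mul_assoc] using h
    have hcont : IntervalIntegrable (fun u : ℝ => Complex.I * Complex.exp (Complex.I * u * y))
        MeasureTheory.volume 0 t := by
      apply Continuous.intervalIntegrable
      fun_prop
    rw [intervalIntegral.integral_eq_sub_of_hasDerivAt hder hcont]
    push_cast
    rw [mul_zero, Complex.exp_zero]
    ring

theorem eta_deriv_bound (t : ℝ) :
    ∀ x : ℝ,
      ‖deriv (fun y : ℝ =>
          if y = 0 then Complex.I * t else (Complex.exp (Complex.I * t * y) - 1) / y) x‖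
        ≤ t ^ 2 / 2 := by
  intro x
  have heq : (fun y : ℝ =>
      if y = 0 then Complex.I * t else (Complex.exp (Complex.I * t * y) - 1) / y)
      = fun y : ℝ => ∫ u in (0:ℝ)..t, Complex.I * Complex.exp (Complex.I * u * y) :=
    funext fun y => eta_eq t y
  rw [heq]
  have hnorm : ∀ (u : ℝ) (z : ℝ), ‖-(u : ℂ) * Complex.exp (Complex.I * u * z)‖ = |u| := by
    intro u z
    have : Complex.I * u * z = ((u * z : ℝ) : ℂ) * Complex.I := by push_cast; ring
    simp [this, Complex.norm_exp]
  have hdiff : ∀ (u : ℝ) (z : ℝ),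
      HasDerivAt (fun y : ℝ => Complex.I * Complex.exp (Complex.I * u * y))
        (-(u : ℂ) * Complex.exp (Complex.I * u * z)) z := by
    intro u z
    have h := (inner_hasDerivAt (Complex.I * u) z).const_mul Complex.I
    have hval : Complex.I * (Complex.I * u * Complex.exp (Complex.I * u * z))
        = -(u : ℂ) * Complex.exp (Complex.I * u * z) := by
      have h2 : Complex.I * (Complex.I * u * Complex.exp (Complex.I * u * z))
          = (Complex.I * Complex.I) * (u * Complex.exp (Complex.I * u * z)) := by ring
      rw [h2, Complex.I_mul_I]; ring
    rw [hval] at h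
    exact h
  have hFc : ∀ z : ℝ, Continuous (fun u : ℝ => Complex.I * Complex.exp (Complex.I * u * z)) := by
    intro z; fun_prop
  have hF'c : Continuous (fun u : ℝ => -(u : ℂ) * Complex.exp (Complex.I * u * x)) := by
    fun_prop
  have key : HasDerivAt (fun y : ℝ => ∫ u in (0:ℝ)..t, Complex.I * Complex.exp (Complex.I * u * y))
      (∫ u in (0:ℝ)..t, -(u : ℂ) * Complex.exp (Complex.I * u * x)) x :=
    (intervalIntegral.hasDerivAt_integral_of_dominated_loc_of_deriv_le
      (F := fun (y : ℝ) (u : ℝ) => Complex.I * Complex.exp (Complex.I * u * y))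
      (F' := fun (y : ℝ) (u : ℝ) => -(u : ℂ) * Complex.exp (Complex.I * u * y))
      (bound := fun u => |u|)
      Filter.univ_mem
      (Filter.Eventually.of_forall fun z => (hFc z).aestronglyMeasurable)
      ((hFc x).intervalIntegrable 0 t)
      hF'c.aestronglyMeasurable
      (ae_of_all _ fun u _ z _ => le_of_eq (hnorm u z))
      ((_root_.continuous_abs).intervalIntegrable 0 t)
      (ae_of_all _ fun u _ z _ => hdiff u z)).2
  rw [key.deriv]
  calc ‖∫ u in (0:ℝ)..t, -(u : ℂ) * Complex.exp (Complex.I * u * x)‖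
      ≤ |(∫ u in (0:ℝ)..t, ‖-(u : ℂ) * Complex.exp (Complex.I * u * x)‖)| :=
        intervalIntegral.norm_integral_le_abs_integral_norm
    _ = |(∫ u in (0:ℝ)..t, |u|)| := by
        congr 1
        exact intervalIntegral.integral_congr fun u _ => hnorm u x
    _ ≤ t ^ 2 / 2 := by
        rcases le_or_gt 0 t with ht | ht
        · have h : (∫ u in (0:ℝ)..t, |u|) = ∫ u in (0:ℝ)..t, u :=
            intervalIntegral.integral_congr fun u hu => by
              rw [Set.uIcc_of_le ht] at hu
              exact abs_of_nonneg hu.1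
          rw [h, integral_id,
            _root_.abs_of_nonneg (by nlinarith : (0:ℝ) ≤ (t ^ 2 - 0 ^ 2) / 2)]
          nlinarith
        · have h : (∫ u in (0:ℝ)..t, |u|) = ∫ u in (0:ℝ)..t, -u :=
            intervalIntegral.integral_congr fun u hu => by
              rw [Set.uIcc_of_ge ht.le] at hu
              exact abs_of_nonpos hu.2
          rw [h, intervalIntegral.integral_neg, integral_id, abs_neg,
            _root_.abs_of_nonneg (by nlinarith : (0:ℝ) ≤ (t ^ 2 - 0 ^ 2) / 2)]
          nlinarith
end

section
/- For every real u, the function δ(u) = 2(1 − u·sin u − cos u) + u² satisfies 0 ≤ δ(u) ≤ u⁴/4. -/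
open Real

lemma delta_upper_aux : ∀ u : ℝ, 0 ≤ u →
    2 * (1 - u * Real.sin u - Real.cos u) + u ^ 2 ≤ u ^ 4 / 4 := by
  set f : ℝ → ℝ := fun u => u ^ 4 / 4 - (2 * (1 - u * Real.sin u - Real.cos u) + u ^ 2) with hf
  have hd : ∀ x : ℝ, HasDerivAt f (x ^ 3 - 2 * x + 2 * x * Real.cos x) x := by
    intro x
    have h1 : HasDerivAt (fun u : ℝ => u * Real.sin u)
        (1 * Real.sin x + x * Real.cos x) x :=
      (hasDerivAt_id x).mul (Real.hasDerivAt_sin x)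
    have h2 : HasDerivAt (fun u : ℝ => u ^ 4 / 4) ((4 : ℕ) * x ^ 3 / 4) x :=
      (hasDerivAt_pow 4 x).div_const 4
    have h3 : HasDerivAt (fun u : ℝ => u ^ 2) ((2 : ℕ) * x ^ 1) x := hasDerivAt_pow 2 x
    have := h2.sub (((((hasDerivAt_const x (1:ℝ)).sub h1).sub (Real.hasDerivAt_cos x)).const_mul
      (2 : ℝ)).add h3)
    refine this.congr_deriv ?_
    push_cast
    ring
  have hmono : MonotoneOn f (Set.Ici (0 : ℝ)) := by
    apply monotoneOn_of_deriv_nonneg (convex_Ici 0)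
    · exact Continuous.continuousOn (by continuity)
    · intro x hx
      exact (hd x).differentiableAt.differentiableWithinAt
    · intro x hx
      rw [interior_Ici] at hx
      rw [(hd x).deriv]
      have hx0 : (0 : ℝ) < x := hx
      have h1 : 1 - Real.cos x = 2 * Real.sin (x / 2) ^ 2 := by
        have := Real.sin_sq_eq_half_sub (x / 2)
        rw [show 2 * (x / 2) = x by ring] at this
        linarith
      have h2 : Real.sin (x / 2) ^ 2 ≤ (x / 2) ^ 2 := Real.sin_sq_le_sq
      nlinarith
  intro u hu
  have := hmono (Set.self_mem_Ici) hu hu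
  have hf0 : f 0 = 0 := by simp [hf]
  simp only [hf] at this hf0
  linarith

theorem delta_bounds (u : ℝ) :
    0 ≤ 2 * (1 - u * Real.sin u - Real.cos u) + u ^ 2 ∧
      2 * (1 - u * Real.sin u - Real.cos u) + u ^ 2 ≤ u ^ 4 / 4 := by
  constructor
  · have hs : Real.sin u = 2 * Real.sin (u / 2) * Real.cos (u / 2) := by
      rw [← Real.sin_two_mul, show 2 * (u / 2) = u by ring]
    have hc : Real.cos u = 1 - 2 * Real.sin (u / 2) ^ 2 := by
      have := Real.sin_sq_eq_half_sub (u / 2)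
      rw [show 2 * (u / 2) = u by ring] at this
      linarith
    have hpyth := Real.sin_sq_add_cos_sq (u / 2)
    rw [hs, hc]
    nlinarith [sq_nonneg (2 * Real.sin (u / 2) - u * Real.cos (u / 2)),
      sq_nonneg (u * Real.sin (u / 2)), sq_nonneg u]
  · rcases le_or_gt 0 u with h | h
    · exact delta_upper_aux u h
    · have := delta_upper_aux (-u) (by linarith)
      simp only [Real.sin_neg, Real.cos_neg, neg_mul, mul_neg, neg_neg] at this
      have h4 : (-u) ^ 4 = u ^ 4 := by ring
      linarith
end

section
/- There exist positive absolute constants δ and C such that the characteristic function φ(t) = exp(∫₀¹ (e^{itu}−1)/u du) of the Dickman distribution satisfies ∫_{−∞}^{∞} |φ(t)|² dt < ∞; moreover |φ(t)|² = exp(−2∫₀¹ (1−cos tu)/u du) and for t ≥ δ one has |φ(t)|² ≤ C/t². -/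
open MeasureTheory

noncomputable def gD : ℝ → ℝ := fun z => (1 - Real.cos z) / z

lemma gD_nonneg {z : ℝ} (hz : 0 ≤ z) : 0 ≤ gD z :=
  div_nonneg (by linarith [Real.cos_le_one z]) hz

lemma one_sub_cos_le_sq (x : ℝ) : 1 - Real.cos x ≤ x ^ 2 / 2 := by
  have := Real.one_sub_sq_div_two_le_cos (x := x); linarith

lemma gD_abs_le (z : ℝ) : |gD z| ≤ |z| / 2 := by
  rcases eq_or_ne z 0 with rfl | hz
  · simp [gD]
  · have h1 : |gD z| = (1 - Real.cos z) / |z| := by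
      rw [gD, abs_div, abs_of_nonneg (by linarith [Real.cos_le_one z] : (0:ℝ) ≤ 1 - Real.cos z)]
    rw [h1, div_le_iff₀ (abs_pos.2 hz)]
    have h2 := one_sub_cos_le_sq z
    have h3 : z ^ 2 = |z| * |z| := by rw [← sq_abs, sq]
    nlinarith [abs_pos.2 hz]

lemma intInt_of_bdd {E : Type*} [NormedAddCommGroup E] {f : ℝ → E}
    (hm : AEStronglyMeasurable f volume) {a b C : ℝ}
    (hC : ∀ z ∈ Set.uIcc a b, ‖f z‖ ≤ C) : IntervalIntegrable f volume a b := by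
  rw [intervalIntegrable_iff]
  refine Integrable.mono' (intervalIntegrable_iff.1
    (intervalIntegrable_const (c := C))) hm.restrict ?_
  filter_upwards [ae_restrict_mem measurableSet_uIoc] with z hz
  exact hC z (Set.uIoc_subset_uIcc hz)

lemma gD_measurable : Measurable gD :=
  ((continuous_const.sub Real.continuous_cos).measurable).div measurable_id

lemma gD_intInt (a b : ℝ) : IntervalIntegrable gD volume a b := by
  refine intInt_of_bdd gD_measurable.aestronglyMeasurable (C := (|a| + |b|) / 2) ?_
  intro z hz
  have h : |z| ≤ |a| + |b| := by
    rcases Set.mem_uIcc.1 hz with ⟨h1, h2⟩ | ⟨h1, h2⟩ <;> rw [abs_le] <;>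
      constructor <;>
      linarith [le_abs_self a, le_abs_self b, neg_abs_le a, neg_abs_le b]
  calc ‖gD z‖ = |gD z| := rfl
    _ ≤ |z| / 2 := gD_abs_le z
    _ ≤ (|a| + |b|) / 2 := by linarith

lemma abs_exp_mul_I_sub_one_le (x : ℝ) :
    ‖Complex.exp (x * Complex.I) - 1‖ ≤ |x| := by
  rw [Complex.norm_def]
  have h1 : Complex.normSq (Complex.exp (x * Complex.I) - 1) = 2 * (1 - Real.cos x) := by
    rw [Complex.normSq_apply]
    simp only [Complex.sub_re, Complex.sub_im, Complex.exp_ofReal_mul_I_re,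
      Complex.exp_ofReal_mul_I_im, Complex.one_re, Complex.one_im]
    nlinarith [Real.sin_sq_add_cos_sq x]
  rw [h1]
  have h2 : 2 * (1 - Real.cos x) ≤ x ^ 2 := by linarith [one_sub_cos_le_sq x]
  calc Real.sqrt (2 * (1 - Real.cos x)) ≤ Real.sqrt (x ^ 2) := Real.sqrt_le_sqrt h2
    _ = |x| := Real.sqrt_sq_eq_abs x

lemma cint (t : ℝ) : IntervalIntegrable
    (fun u : ℝ => (Complex.exp (Complex.I * t * u) - 1) / u) volume 0 1 := by
  have hm : Measurable fun u : ℝ => (Complex.exp (Complex.I * t * u) - 1) / (u : ℂ) := by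
    refine Measurable.div ?_ Complex.measurable_ofReal
    exact ((Complex.continuous_exp.comp
      (continuous_const.mul Complex.continuous_ofReal)).sub continuous_const).measurable
  refine intInt_of_bdd hm.aestronglyMeasurable (C := |t|) ?_
  intro u hu
  rw [Set.uIcc_of_le zero_le_one] at hu
  rcases eq_or_ne u 0 with rfl | hu0
  · simp [abs_nonneg]
  · have hu' : 0 < u := lt_of_le_of_ne hu.1 (Ne.symm hu0)
    have hrw : Complex.I * t * u = ((t * u : ℝ) : ℂ) * Complex.I := by push_cast; ring
    have h1 : ‖(Complex.exp (Complex.I * t * u) - 1) / (u : ℂ)‖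
        = ‖Complex.exp (((t * u : ℝ) : ℂ) * Complex.I) - 1‖ / u := by
      rw [← hrw]
      rw [norm_div]
      simp [abs_of_pos hu']
    rw [h1, div_le_iff₀ hu']
    calc ‖Complex.exp (((t * u : ℝ) : ℂ) * Complex.I) - 1‖ ≤ |t * u| :=
          abs_exp_mul_I_sub_one_le (t * u)
      _ = |t| * u := by rw [abs_mul, abs_of_pos hu']

lemma rint (t : ℝ) : IntervalIntegrable
    (fun u : ℝ => (1 - Real.cos (t * u)) / u) volume 0 1 := by
  have hm : Measurable fun u : ℝ => (1 - Real.cos (t * u)) / u :=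
    (measurable_const.sub ((measurable_const.mul measurable_id).cos)).div measurable_id
  refine intInt_of_bdd hm.aestronglyMeasurable (C := t ^ 2 / 2) ?_
  intro u hu
  rw [Set.uIcc_of_le zero_le_one] at hu
  rcases eq_or_ne u 0 with rfl | hu0
  · simp; positivity
  · have hu' : 0 < u := lt_of_le_of_ne hu.1 (Ne.symm hu0)
    have h1 : ‖(1 - Real.cos (t * u)) / u‖ = (1 - Real.cos (t * u)) / u := by
      rw [Real.norm_eq_abs, abs_of_nonneg]
      exact div_nonneg (by linarith [Real.cos_le_one (t * u)]) hu'.le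
    rw [h1, div_le_iff₀ hu']
    have h2 := one_sub_cos_le_sq (t * u)
    have hu1 : u ≤ 1 := hu.2
    nlinarith [sq_nonneg t, sq_nonneg (t * u)]

lemma rep (t : ℝ) :
    ‖(Complex.exp
        (∫ u in (0:ℝ)..1, (Complex.exp (Complex.I * t * u) - 1) / u))‖ ^ 2
      = Real.exp (-2 * ∫ u in (0:ℝ)..1, (1 - Real.cos (t * u)) / u) := by
  rw [Complex.norm_exp, ← Real.exp_nat_mul]
  congr 1
  have hre : (∫ u in (0:ℝ)..1, (Complex.exp (Complex.I * t * u) - 1) / u).re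
      = ∫ u in (0:ℝ)..1, -((1 - Real.cos (t * u)) / u) := by
    have hcc := Complex.reCLM.intervalIntegral_comp_comm (cint t)
    simp only [Complex.reCLM_apply] at hcc
    rw [← hcc]
    apply intervalIntegral.integral_congr
    intro u _
    show ((Complex.exp (Complex.I * t * u) - 1) / (u : ℂ)).re = _
    rw [Complex.div_ofReal_re]
    have hrw : Complex.I * t * u = ((t * u : ℝ) : ℂ) * Complex.I := by push_cast; ring
    rw [hrw]
    simp only [Complex.sub_re, Complex.exp_ofReal_mul_I_re, Complex.one_re]
    ring
  rw [hre, intervalIntegral.integral_neg]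
  push_cast
  ring

lemma F_nonneg (t : ℝ) : 0 ≤ ∫ u in (0:ℝ)..1, (1 - Real.cos (t * u)) / u := by
  apply intervalIntegral.integral_nonneg zero_le_one
  intro u hu
  exact div_nonneg (by linarith [Real.cos_le_one (t * u)]) hu.1

lemma F_even (t : ℝ) : (∫ u in (0:ℝ)..1, (1 - Real.cos (-t * u)) / u)
    = ∫ u in (0:ℝ)..1, (1 - Real.cos (t * u)) / u := by
  apply intervalIntegral.integral_congr
  intro u _
  simp only [neg_mul, Real.cos_neg]

lemma F_eq {t : ℝ} (ht : 0 < t) :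
    (∫ u in (0:ℝ)..1, (1 - Real.cos (t * u)) / u) = ∫ z in (0:ℝ)..t, gD z := by
  have h1 : (∫ u in (0:ℝ)..1, (1 - Real.cos (t * u)) / u)
      = ∫ u in (0:ℝ)..1, t * gD (t * u) := by
    apply intervalIntegral.integral_congr
    intro u _
    show (1 - Real.cos (t * u)) / u = t * ((1 - Real.cos (t * u)) / (t * u))
    rw [← mul_div_assoc, mul_div_mul_left _ _ ht.ne']
  rw [h1, intervalIntegral.integral_const_mul]
  have h2 := intervalIntegral.smul_integral_comp_mul_left (a := (0:ℝ)) (b := 1) gD t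
  simpa using h2

lemma cos_div_bound {t : ℝ} (ht : 1 ≤ t) : |∫ z in (1:ℝ)..t, z⁻¹ * Real.cos z| ≤ 3 := by
  have huIcc : Set.uIcc (1:ℝ) t = Set.Icc 1 t := Set.uIcc_of_le ht
  have hu : ∀ x ∈ Set.uIcc (1:ℝ) t, HasDerivAt (fun z : ℝ => z⁻¹) (-(x ^ 2)⁻¹) x := by
    intro x hx; rw [huIcc] at hx
    exact hasDerivAt_inv (by intro h; rw [h] at hx; linarith [hx.1])
  have hv : ∀ x ∈ Set.uIcc (1:ℝ) t, HasDerivAt Real.sin (Real.cos x) x :=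
    fun x _ => Real.hasDerivAt_sin x
  have hcont : ContinuousOn (fun x : ℝ => -(x ^ 2)⁻¹) (Set.uIcc 1 t) := by
    apply ContinuousOn.neg
    apply ContinuousOn.inv₀ (continuous_pow 2).continuousOn
    intro x hx; rw [huIcc] at hx
    have : (1:ℝ) ≤ x := hx.1
    positivity
  have hu' : IntervalIntegrable (fun x : ℝ => -(x ^ 2)⁻¹) volume 1 t :=
    hcont.intervalIntegrable
  have hv' : IntervalIntegrable Real.cos volume 1 t :=
    Real.continuous_cos.intervalIntegrable _ _
  have ibp := intervalIntegral.integral_mul_deriv_eq_deriv_mul hu hv hu' hv'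
  rw [ibp]
  have hsint : IntervalIntegrable (fun x : ℝ => (x ^ 2)⁻¹) volume 1 t := by
    apply ContinuousOn.intervalIntegrable
    apply ContinuousOn.inv₀ (continuous_pow 2).continuousOn
    intro x hx; rw [huIcc] at hx
    have h1 : (1:ℝ) ≤ x := hx.1
    positivity
  have hFTC : (∫ x in (1:ℝ)..t, (x ^ 2)⁻¹) = -t⁻¹ - -(1:ℝ)⁻¹ := by
    apply intervalIntegral.integral_eq_sub_of_hasDerivAt
    · intro x hx; rw [huIcc] at hx
      have hx0 : x ≠ 0 := by intro h; rw [h] at hx; linarith [hx.1]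
      simpa using (hasDerivAt_inv hx0).fun_neg
    · exact hsint
  have h3 : |∫ x in (1:ℝ)..t, -(x ^ 2)⁻¹ * Real.sin x| ≤ 1 := by
    have hb : ‖∫ x in (1:ℝ)..t, -(x ^ 2)⁻¹ * Real.sin x‖
        ≤ |∫ x in (1:ℝ)..t, (x ^ 2)⁻¹| := by
      apply intervalIntegral.norm_integral_le_abs_of_norm_le _ hsint
      filter_upwards [ae_restrict_mem measurableSet_uIoc] with x hx
      have hx1 : (1:ℝ) < x := by
        rw [Set.uIoc_of_le ht] at hx
        exact hx.1
      rw [norm_mul, norm_neg, norm_inv]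
      have h4 : ‖x ^ 2‖ = x ^ 2 := by rw [Real.norm_eq_abs, abs_of_pos (by nlinarith)]
      rw [h4]
      calc (x ^ 2)⁻¹ * ‖Real.sin x‖ ≤ (x ^ 2)⁻¹ * 1 := by
            apply mul_le_mul_of_nonneg_left _ (by positivity)
            rw [Real.norm_eq_abs]
            exact abs_le.2 ⟨Real.neg_one_le_sin x, Real.sin_le_one x⟩
        _ = (x ^ 2)⁻¹ := mul_one _
    rw [Real.norm_eq_abs] at hb
    have ht0 : (0:ℝ) < t := by linarith
    have hti : t⁻¹ ≤ 1 := by rw [inv_le_one_iff₀]; right; exact ht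
    have hti0 : 0 < t⁻¹ := inv_pos.2 ht0
    rw [hFTC] at hb
    have : |-t⁻¹ - -(1:ℝ)⁻¹| ≤ 1 := by rw [abs_le]; constructor <;> simp <;> linarith
    linarith
  have h5 : |t⁻¹ * Real.sin t| ≤ 1 := by
    rw [abs_mul]
    have ht0 : (0:ℝ) < t := by linarith
    have h6 : |t⁻¹| ≤ 1 := by
      rw [abs_of_pos (inv_pos.2 ht0), inv_le_one_iff₀]; right; exact ht
    have h7 : |Real.sin t| ≤ 1 := abs_le.2 ⟨Real.neg_one_le_sin t, Real.sin_le_one t⟩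
    calc |t⁻¹| * |Real.sin t| ≤ 1 * 1 := by
          apply mul_le_mul h6 h7 (abs_nonneg _) zero_le_one
      _ = 1 := one_mul 1
  have h8 : |(1:ℝ)⁻¹ * Real.sin 1| ≤ 1 := by
    rw [inv_one, one_mul]
    exact abs_le.2 ⟨Real.neg_one_le_sin 1, Real.sin_le_one 1⟩
  rw [abs_le] at *
  constructor <;> linarith [h3.1, h3.2, h5.1, h5.2, h8.1, h8.2]

lemma F_lower {t : ℝ} (ht : 1 ≤ t) :
    Real.log t - 3 ≤ ∫ u in (0:ℝ)..1, (1 - Real.cos (t * u)) / u := by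
  rw [F_eq (lt_of_lt_of_le one_pos ht)]
  have hsplit : (∫ z in (0:ℝ)..1, gD z) + (∫ z in (1:ℝ)..t, gD z)
      = ∫ z in (0:ℝ)..t, gD z :=
    intervalIntegral.integral_add_adjacent_intervals (gD_intInt 0 1) (gD_intInt 1 t)
  have h01 : 0 ≤ ∫ z in (0:ℝ)..1, gD z :=
    intervalIntegral.integral_nonneg zero_le_one fun z hz => gD_nonneg hz.1
  have hcont1 : ContinuousOn (fun z : ℝ => z⁻¹) (Set.uIcc 1 t) := by
    apply ContinuousOn.inv₀ continuous_id.continuousOn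
    intro x hx; rw [Set.uIcc_of_le ht] at hx
    intro h; simp only [id_eq] at h; rw [h] at hx; linarith [hx.1]
  have hint1 : IntervalIntegrable (fun z : ℝ => z⁻¹) volume 1 t :=
    hcont1.intervalIntegrable
  have hint2 : IntervalIntegrable (fun z : ℝ => z⁻¹ * Real.cos z) volume 1 t :=
    (hcont1.mul Real.continuous_cos.continuousOn).intervalIntegrable
  have h1t : (∫ z in (1:ℝ)..t, gD z)
      = Real.log t - ∫ z in (1:ℝ)..t, z⁻¹ * Real.cos z := by
    have hcg : ∀ z ∈ Set.uIcc (1:ℝ) t, gD z = z⁻¹ - z⁻¹ * Real.cos z := by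
      intro z hz; rw [Set.uIcc_of_le ht] at hz
      have hz0 : z ≠ 0 := by intro h; rw [h] at hz; linarith [hz.1]
      rw [gD]; field_simp
    rw [intervalIntegral.integral_congr hcg, intervalIntegral.integral_sub hint1 hint2,
      integral_inv_of_pos one_pos (by linarith), div_one]
  have hb := abs_le.1 (cos_div_bound ht)
  linarith [hb.1, hb.2, hsplit]

lemma tail_bound {t : ℝ} (ht : 1 ≤ t) :
    Real.exp (-2 * ∫ u in (0:ℝ)..1, (1 - Real.cos (t * u)) / u) ≤ Real.exp 6 / t ^ 2 := by
  have ht0 : (0:ℝ) < t := by linarith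
  have hF := F_lower ht
  calc Real.exp (-2 * ∫ u in (0:ℝ)..1, (1 - Real.cos (t * u)) / u)
      ≤ Real.exp (6 - 2 * Real.log t) := by apply Real.exp_le_exp.2; linarith
    _ = Real.exp 6 / t ^ 2 := by
        rw [Real.exp_sub]
        congr 1
        rw [show (2:ℝ) * Real.log t = Real.log (t ^ 2) by
          rw [Real.log_pow]; push_cast; ring]
        exact Real.exp_log (by positivity)

theorem dickman_char_sq_integrable :
    ∃ δ C : ℝ, 0 < δ ∧ 0 < C ∧
      (Integrable (fun t : ℝ =>
        ‖(Complex.exp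
          (∫ u in (0:ℝ)..1, (Complex.exp (Complex.I * t * u) - 1) / u))‖ ^ 2)) ∧
      (∀ t : ℝ,
        ‖(Complex.exp
            (∫ u in (0:ℝ)..1, (Complex.exp (Complex.I * t * u) - 1) / u))‖ ^ 2
          = Real.exp (-2 * ∫ u in (0:ℝ)..1, (1 - Real.cos (t * u)) / u)) ∧
      (∀ t : ℝ, δ ≤ t →
        ‖(Complex.exp
            (∫ u in (0:ℝ)..1, (Complex.exp (Complex.I * t * u) - 1) / u))‖ ^ 2
          ≤ C / t ^ 2) := by
  refine ⟨1, Real.exp 6, one_pos, Real.exp_pos 6, ?_, rep, ?_⟩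
  · have heq : (fun t : ℝ =>
        ‖(Complex.exp
          (∫ u in (0:ℝ)..1, (Complex.exp (Complex.I * t * u) - 1) / u))‖ ^ 2)
        = fun t : ℝ => Real.exp (-2 * ∫ u in (0:ℝ)..1, (1 - Real.cos (t * u)) / u) :=
      funext rep
    rw [heq]
    have hFm : Measurable fun t : ℝ => ∫ u in (0:ℝ)..1, (1 - Real.cos (t * u)) / u := by
      have hpt : ∀ t : ℝ, (∫ u in (0:ℝ)..1, (1 - Real.cos (t * u)) / u)
          = ∫ u in Set.Ioc (0:ℝ) 1, (1 - Real.cos (t * u)) / u :=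
        fun t => intervalIntegral.integral_of_le zero_le_one
      simp only [hpt]
      have hsm : StronglyMeasurable fun p : ℝ × ℝ => (1 - Real.cos (p.1 * p.2)) / p.2 :=
        ((measurable_const.sub ((measurable_fst.mul measurable_snd).cos)).div
          measurable_snd).stronglyMeasurable
      exact (hsm.integral_prod_right').measurable
    apply Integrable.mono' (integrable_inv_one_add_sq.const_mul (2 * Real.exp 6))
    · exact (Real.measurable_exp.comp (hFm.const_mul (-2))).aestronglyMeasurable
    · filter_upwards with t
      rw [Real.norm_eq_abs, abs_of_pos (Real.exp_pos _)]
      rcases le_total (|t|) 1 with h1 | h1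
      · have hF := F_nonneg t
        have hL : Real.exp (-2 * ∫ u in (0:ℝ)..1, (1 - Real.cos (t * u)) / u) ≤ 1 := by
          have h9 := Real.exp_le_exp.2
            (show -2 * ∫ u in (0:ℝ)..1, (1 - Real.cos (t * u)) / u ≤ 0 by linarith)
          simpa [Real.exp_zero] using h9
        have ht2 : t ^ 2 ≤ 1 := by
          rw [← sq_abs]; nlinarith [abs_nonneg t]
        have h2 : (1:ℝ) + t ^ 2 ≤ 2 := by linarith
        have h3 : (1:ℝ) / 2 ≤ (1 + t ^ 2)⁻¹ := by
          rw [div_le_iff₀ (by norm_num : (0:ℝ) < 2)]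
          rw [inv_mul_eq_div, le_div_iff₀ (by positivity)]
          linarith
        have h4 : (1:ℝ) ≤ Real.exp 6 := Real.one_le_exp (by norm_num)
        calc Real.exp (-2 * ∫ u in (0:ℝ)..1, (1 - Real.cos (t * u)) / u) ≤ 1 := hL
          _ ≤ 2 * Real.exp 6 * (1 + t ^ 2)⁻¹ := by nlinarith
      · have habs : (∫ u in (0:ℝ)..1, (1 - Real.cos (t * u)) / u)
            = ∫ u in (0:ℝ)..1, (1 - Real.cos (|t| * u)) / u := by
          rcases abs_choice t with h | h
          · rw [h]
          · rw [h]; exact (F_even t).symm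
        have htb := tail_bound h1
        rw [← habs] at htb
        have ht2 : t ^ 2 = |t| ^ 2 := (sq_abs t).symm
        have h7 : Real.exp 6 / |t| ^ 2 ≤ 2 * Real.exp 6 * (1 + t ^ 2)⁻¹ := by
          rw [div_le_iff₀ (by nlinarith [abs_nonneg t] : (0:ℝ) < |t| ^ 2)]
          have h8 : (0:ℝ) < 1 + t ^ 2 := by positivity
          rw [mul_assoc, mul_comm ((1 + t ^ 2)⁻¹), ← mul_assoc]
          rw [← div_eq_mul_inv, le_div_iff₀ h8]
          have h9 : (1:ℝ) ≤ |t| ^ 2 := by nlinarith [abs_nonneg t]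
          nlinarith [Real.exp_pos 6, h9, ht2]
        calc Real.exp (-2 * ∫ u in (0:ℝ)..1, (1 - Real.cos (t * u)) / u)
            ≤ Real.exp 6 / |t| ^ 2 := htb
          _ ≤ 2 * Real.exp 6 * (1 + t ^ 2)⁻¹ := h7
  · intro t ht
    rw [rep t]
    exact tail_bound ht
end

section
/- Let (V_n) be a sequence of centered square-integrable random variables such that for some β > 0 and constant C and for all integers m ≥ 0, n ≥ 1, E[(Σ_{i=m+1}^{m+n} V_i)²] ≤ C((m+n)^β − m^β). Then for every δ > 0, Σ_{i=1}^n V_i = O(n^{β/2}(log n)^{2+δ}) almost surely. -/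
open MeasureTheory Filter Asymptotics

lemma gk_chain (t : ℝ) : ∀ (k : ℕ) (g : ℕ → ℝ),
    (∀ l ≤ k, ∀ j < 2 ^ (k - l), |g ((j + 1) * 2 ^ l) - g (j * 2 ^ l)| ≤ t) →
    ∀ n ≤ 2 ^ k, |g n - g 0| ≤ (k + 1) * t := by
  intro k
  induction k with
  | zero =>
    intro g hg n hn
    have ht : 0 ≤ t := le_trans (abs_nonneg _) (hg 0 le_rfl 0 (by norm_num))
    interval_cases n
    · simpa using ht
    · simpa using hg 0 le_rfl 0 (by norm_num)
  | succ k ih =>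
    intro g hg n hn
    have ht : 0 ≤ t := le_trans (abs_nonneg _) (hg 0 (Nat.zero_le _) 0 (by positivity))
    by_cases h : n ≤ 2 ^ k
    · have h1 := ih g (fun l hl j hj => hg l (hl.trans (Nat.le_succ k)) j
        (lt_of_lt_of_le hj (Nat.pow_le_pow_right (by norm_num)
          (Nat.sub_le_sub_right (Nat.le_succ k) l)))) n h
      push_cast at h1 ⊢
      nlinarith
    · push_neg at h
      have hk2 : 2 ^ k ≤ n := h.le
      have hm2 : n - 2 ^ k ≤ 2 ^ k := by
        have : 2 ^ (k + 1) = 2 ^ k + 2 ^ k := by ring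
        omega
      have h2 := ih (fun i => g (2 ^ k + i)) ?_ (n - 2 ^ k) hm2
      · have hblock : |g (2 ^ k) - g 0| ≤ t := by
          have := hg k (Nat.le_succ k) 0 (by simp)
          simpa using this
        have heq : 2 ^ k + (n - 2 ^ k) = n := by omega
        simp only [heq, Nat.add_zero] at h2
        have tri := abs_sub_le (g n) (g (2 ^ k)) (g 0)
        push_cast at h2 ⊢
        linarith
      · intro l hl j hj
        have hpow : 2 ^ (k - l) * 2 ^ l = 2 ^ k := by
          rw [← pow_add]; congr 1; omega
        have ha : 2 ^ k + j * 2 ^ l = (2 ^ (k - l) + j) * 2 ^ l := by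
          rw [add_mul, hpow]
        have hb : 2 ^ k + (j + 1) * 2 ^ l = ((2 ^ (k - l) + j) + 1) * 2 ^ l := by
          rw [add_mul, add_mul, add_mul, hpow]; ring
        have hlt : 2 ^ (k - l) + j < 2 ^ (k + 1 - l) := by
          have : 2 ^ (k + 1 - l) = 2 ^ (k - l) + 2 ^ (k - l) := by
            rw [show k + 1 - l = (k - l) + 1 by omega, pow_succ]; ring
          omega
        have := hg l (hl.trans (Nat.le_succ k)) (2 ^ (k - l) + j) hlt
        simpa only [ha, hb] using this

theorem gaal_koksma {Ω : Type*} [MeasurableSpace Ω] (μ : Measure Ω)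
    [IsProbabilityMeasure μ] (V : ℕ → Ω → ℝ)
    (hL2 : ∀ n, MemLp (V n) 2 μ)
    (hcent : ∀ n, ∫ ω, V n ω ∂μ = 0)
    (β C : ℝ) (hβ : 0 < β)
    (hbound : ∀ m n : ℕ, 1 ≤ n →
      ∫ ω, (∑ i ∈ Finset.Icc (m + 1) (m + n), V i ω) ^ 2 ∂μ
        ≤ C * (((m + n : ℕ) : ℝ) ^ β - (m : ℝ) ^ β)) :
    ∀ δ : ℝ, 0 < δ → ∀ᵐ ω ∂μ,
      (fun n : ℕ => ∑ i ∈ Finset.Icc 1 n, V i ω) =O[atTop]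
        (fun n : ℕ => (n : ℝ) ^ (β / 2) * Real.log n ^ (2 + δ)) := by
  intro δ hδ
  have hC : 0 ≤ C := by
    have h1 := hbound 0 1 le_rfl
    have h2 : (0:ℝ) ≤ ∫ ω, (∑ i ∈ Finset.Icc (0 + 1) (0 + 1), V i ω) ^ 2 ∂μ :=
      integral_nonneg fun ω => sq_nonneg _
    simp only [Nat.zero_add, Nat.cast_one, Nat.cast_zero, Real.one_rpow,
      Real.zero_rpow hβ.ne'] at h1
    linarith
  -- basic facts about partial-sum differences
  have hS2 : ∀ a b : ℕ, MemLp (fun ω => ∑ i ∈ Finset.Ioc a b, V i ω) 2 μ :=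
    fun a b => memLp_finsetSum _ fun i _ => hL2 i
  have hSint : ∀ a b : ℕ, ∫ ω, (∑ i ∈ Finset.Ioc a b, V i ω) ∂μ = 0 := by
    intro a b
    rw [integral_finset_sum _ fun i _ => (hL2 i).integrable one_le_two]
    simp [hcent]
  have hSvar : ∀ a b : ℕ, a ≤ b →
      ∫ ω, (∑ i ∈ Finset.Ioc a b, V i ω) ^ 2 ∂μ ≤ C * ((b : ℝ) ^ β - (a : ℝ) ^ β) := by
    intro a b hab
    rcases eq_or_lt_of_le hab with rfl | hlt
    · simp
    · have h := hbound a (b - a) (by omega)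
      have hba : a + (b - a) = b := by omega
      rw [hba] at h
      rwa [Finset.Icc_add_one_left_eq_Ioc] at h
  -- thresholds
  set t : ℕ → ℝ := fun k => ((2:ℝ) ^ k) ^ (β / 2) * ((k : ℝ) + 1) ^ (1 + δ / 2) with htdef
  have htpos : ∀ k, 0 < t k := fun k => by
    have : (0:ℝ) < (2:ℝ) ^ k := by positivity
    positivity
  -- bad events
  set A : ℕ → Set Ω := fun k => ⋃ (l ∈ Finset.range (k + 1)) (j ∈ Finset.range (2 ^ (k - l))),
      {ω | t k ≤ |∑ i ∈ Finset.Ioc (j * 2 ^ l) ((j + 1) * 2 ^ l), V i ω|} with hA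
  -- Chebyshev bound on each block
  have step1 : ∀ k l j : ℕ,
      μ {ω | t k ≤ |∑ i ∈ Finset.Ioc (j * 2 ^ l) ((j + 1) * 2 ^ l), V i ω|}
        ≤ ENNReal.ofReal (C * ((((j + 1) * 2 ^ l : ℕ) : ℝ) ^ β - ((j * 2 ^ l : ℕ) : ℝ) ^ β)
            / t k ^ 2) := by
    intro k l j
    have hX := hS2 (j * 2 ^ l) ((j + 1) * 2 ^ l)
    have hcheb := ProbabilityTheory.meas_ge_le_variance_div_sq (μ := μ) hX (htpos k)
    simp only [hSint, sub_zero] at hcheb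
    refine hcheb.trans (ENNReal.ofReal_le_ofReal ?_)
    have hvar : ProbabilityTheory.variance
        (fun ω => ∑ i ∈ Finset.Ioc (j * 2 ^ l) ((j + 1) * 2 ^ l), V i ω) μ
        ≤ C * ((((j + 1) * 2 ^ l : ℕ) : ℝ) ^ β - ((j * 2 ^ l : ℕ) : ℝ) ^ β) := by
      rw [ProbabilityTheory.variance_eq_sub hX, hSint]
      simp only [Pi.pow_apply, ne_eq, OfNat.ofNat_ne_zero, not_false_eq_true, zero_pow, sub_zero]
      exact hSvar _ _ (Nat.mul_le_mul_right _ (Nat.le_succ j))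
    exact (div_le_div_iff_of_pos_right (by positivity)).2 hvar
  have hAmeas : ∀ k, μ (A k) ≤ ENNReal.ofReal (C / ((k : ℝ) + 1) ^ (1 + δ)) := by
    intro k
    have term_nonneg : ∀ l j : ℕ,
        (0:ℝ) ≤ C * ((((j + 1) * 2 ^ l : ℕ) : ℝ) ^ β - ((j * 2 ^ l : ℕ) : ℝ) ^ β) / t k ^ 2 := by
      intro l j
      have h1 : ((j * 2 ^ l : ℕ) : ℝ) ^ β ≤ (((j + 1) * 2 ^ l : ℕ) : ℝ) ^ β :=
        Real.rpow_le_rpow (Nat.cast_nonneg _)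
          (Nat.cast_le.2 (Nat.mul_le_mul_right _ (Nat.le_succ j))) hβ.le
      exact div_nonneg (mul_nonneg hC (sub_nonneg.2 h1)) (sq_nonneg _)
    have telescope : ∀ l ≤ k,
        ∑ j ∈ Finset.range (2 ^ (k - l)),
          (C * ((((j + 1) * 2 ^ l : ℕ) : ℝ) ^ β - ((j * 2 ^ l : ℕ) : ℝ) ^ β) / t k ^ 2)
          = C * ((2:ℝ) ^ k) ^ β / t k ^ 2 := by
      intro l hl
      rw [← Finset.sum_div, ← Finset.mul_sum,
        Finset.sum_range_sub (fun j => ((j * 2 ^ l : ℕ) : ℝ) ^ β)]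
      have h20 : 2 ^ (k - l) * 2 ^ l = 2 ^ k := by rw [← pow_add]; congr 1; omega
      rw [h20]
      simp only [Nat.zero_mul, Nat.cast_zero, Real.zero_rpow hβ.ne', sub_zero]
      push_cast
      ring
    calc μ (A k) ≤ ∑ l ∈ Finset.range (k + 1),
          μ (⋃ j ∈ Finset.range (2 ^ (k - l)),
            {ω | t k ≤ |∑ i ∈ Finset.Ioc (j * 2 ^ l) ((j + 1) * 2 ^ l), V i ω|}) :=
        measure_biUnion_finset_le _ _
      _ ≤ ∑ l ∈ Finset.range (k + 1), ∑ j ∈ Finset.range (2 ^ (k - l)),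
            ENNReal.ofReal (C * ((((j + 1) * 2 ^ l : ℕ) : ℝ) ^ β - ((j * 2 ^ l : ℕ) : ℝ) ^ β)
              / t k ^ 2) :=
        Finset.sum_le_sum fun l _ =>
          (measure_biUnion_finset_le _ _).trans (Finset.sum_le_sum fun j _ => step1 k l j)
      _ = ∑ l ∈ Finset.range (k + 1), ENNReal.ofReal (C * ((2:ℝ) ^ k) ^ β / t k ^ 2) := by
          refine Finset.sum_congr rfl fun l hl => ?_
          rw [← ENNReal.ofReal_sum_of_nonneg fun j _ => term_nonneg l j,
            telescope l (by simpa using Nat.lt_succ_iff.1 (Finset.mem_range.1 hl))]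
      _ = ENNReal.ofReal (∑ l ∈ Finset.range (k + 1), C * ((2:ℝ) ^ k) ^ β / t k ^ 2) := by
          rw [← ENNReal.ofReal_sum_of_nonneg]
          intro l _
          have := htpos k
          have h2 : (0:ℝ) < (2:ℝ) ^ k := by positivity
          positivity
      _ ≤ ENNReal.ofReal (C / ((k : ℝ) + 1) ^ (1 + δ)) := by
          apply ENNReal.ofReal_le_ofReal
          rw [Finset.sum_const, Finset.card_range, nsmul_eq_mul]
          have h2 : (0:ℝ) < (2:ℝ) ^ k := by positivity
          have hk1 : (0:ℝ) < (k : ℝ) + 1 := by positivity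
          have ht2 : t k ^ 2 = ((2:ℝ) ^ k) ^ β * ((k : ℝ) + 1) ^ (2 + δ) := by
            rw [htdef]
            simp only
            rw [mul_pow, ← Real.rpow_natCast (((2:ℝ) ^ k) ^ (β / 2)) 2,
              ← Real.rpow_natCast ((((k:ℝ)) + 1) ^ (1 + δ / 2)) 2,
              ← Real.rpow_mul h2.le, ← Real.rpow_mul hk1.le]
            push_cast
            rw [show β / 2 * 2 = β by ring, show (1 + δ / 2) * 2 = 2 + δ by ring]
          have hsplit : ((k : ℝ) + 1) ^ (2 + δ) = ((k : ℝ) + 1) * ((k : ℝ) + 1) ^ (1 + δ) := by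
            rw [show (2 + δ) = 1 + (1 + δ) by ring, Real.rpow_add hk1, Real.rpow_one]
          have hβ2 : ((2:ℝ) ^ k) ^ β ≠ 0 := by positivity
          have h1δ : ((k : ℝ) + 1) ^ (1 + δ) ≠ 0 := (Real.rpow_pos_of_pos hk1 _).ne'
          rw [ht2, hsplit]
          apply le_of_eq
          field_simp
          push_cast
          ring
  -- summability and Borel–Cantelli
  have hsum : (∑' k, μ (A k)) ≠ ⊤ := by
    have h1 : Summable (fun n : ℕ => 1 / (n : ℝ) ^ (1 + δ)) :=
      Real.summable_one_div_nat_rpow.2 (by linarith)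
    have h2 := (summable_nat_add_iff 1).2 h1
    have h3 : Summable (fun k : ℕ => C / ((k : ℝ) + 1) ^ (1 + δ)) := by
      have := h2.mul_left C
      refine this.congr fun k => ?_
      push_cast
      ring
    refine ne_of_lt (lt_of_le_of_lt (ENNReal.tsum_le_tsum hAmeas) ?_)
    rw [← ENNReal.ofReal_tsum_of_nonneg (fun k => div_nonneg hC
      (Real.rpow_nonneg (by positivity) _)) h3]
    exact ENNReal.ofReal_lt_top
  have hae := MeasureTheory.ae_eventually_notMem hsum
  filter_upwards [hae] with ω hω
  rw [Asymptotics.isBigO_iff]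
  have hlog2 : (0:ℝ) < Real.log 2 := Real.log_pos one_lt_two
  set c₁ : ℝ := 1 / Real.log 2 + 2 with hc₁def
  have hc₁ : 0 < c₁ := by positivity
  refine ⟨(2:ℝ) ^ (β / 2) * c₁ ^ (2 + δ / 2), ?_⟩
  obtain ⟨K, hK⟩ := eventually_atTop.1 hω
  rw [eventually_atTop]
  refine ⟨max (2 ^ K) 3, fun n hn => ?_⟩
  have hn3 : 3 ≤ n := le_trans (le_max_right _ _) hn
  have hnK : 2 ^ K ≤ n := le_trans (le_max_left _ _) hn
  have hn0 : n ≠ 0 := by omega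
  set k := Nat.log 2 n with hkdef
  have hk1 : 2 ^ k ≤ n := Nat.pow_log_le_self 2 hn0
  have hk2 : n < 2 ^ (k + 1) := Nat.lt_pow_succ_log_self one_lt_two n
  have hKk : K ≤ k + 1 :=
    le_of_lt ((Nat.pow_lt_pow_iff_right (by norm_num)).1 (lt_of_le_of_lt hnK hk2))
  have hωk : ω ∉ A (k + 1) := hK (k + 1) hKk
  -- the chaining hypothesis
  have hg : ∀ l ≤ k + 1, ∀ j < 2 ^ (k + 1 - l),
      |(fun m => ∑ i ∈ Finset.Ioc 0 m, V i ω) ((j + 1) * 2 ^ l)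
        - (fun m => ∑ i ∈ Finset.Ioc 0 m, V i ω) (j * 2 ^ l)| ≤ t (k + 1) := by
    intro l hl j hj
    simp only
    have hsplit : (∑ i ∈ Finset.Ioc 0 (j * 2 ^ l), V i ω)
        + (∑ i ∈ Finset.Ioc (j * 2 ^ l) ((j + 1) * 2 ^ l), V i ω)
        = ∑ i ∈ Finset.Ioc 0 ((j + 1) * 2 ^ l), V i ω :=
      Finset.sum_Ioc_consecutive _ (Nat.zero_le _) (Nat.mul_le_mul_right _ (Nat.le_succ j))
    have hnot : ¬ t (k + 1) ≤ |∑ i ∈ Finset.Ioc (j * 2 ^ l) ((j + 1) * 2 ^ l), V i ω| := by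
      intro hcon
      exact hωk (Set.mem_biUnion (Finset.mem_range.2 (by omega))
        (Set.mem_biUnion (Finset.mem_range.2 hj) hcon))
    rw [← hsplit, add_sub_cancel_left]
    linarith [not_le.1 hnot]
  have hchain := gk_chain (t (k + 1)) (k + 1) (fun m => ∑ i ∈ Finset.Ioc 0 m, V i ω) hg n (le_of_lt hk2)
  simp only [Finset.Ioc_self, Finset.sum_empty, sub_zero] at hchain
  push_cast at hchain
  -- hchain : |∑ i ∈ Ioc 0 n, V i ω| ≤ (k + 1 + 1) * t (k + 1)
  have hIcc : Finset.Icc 1 n = Finset.Ioc 0 n := by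
    ext i
    simp [Finset.mem_Icc, Finset.mem_Ioc]
    omega
  have hnpos : (0:ℝ) < n := by
    have : (0:ℕ) < n := by omega
    exact_mod_cast this
  have hL1 : 1 ≤ Real.log n := by
    rw [Real.le_log_iff_exp_le hnpos]
    have h3 : (3:ℝ) ≤ n := by exact_mod_cast hn3
    calc Real.exp 1 ≤ 2.7182818286 := Real.exp_one_lt_d9.le
      _ ≤ 3 := by norm_num
      _ ≤ n := h3
  have h2kn : ((2:ℝ) ^ k) ≤ n := by exact_mod_cast hk1
  have hkL : (k : ℝ) * Real.log 2 ≤ Real.log n := by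
    have := Real.log_le_log (by positivity) h2kn
    rwa [Real.log_pow] at this
  have hk2L : (k : ℝ) + 2 ≤ c₁ * Real.log n := by
    have hk' : (k : ℝ) ≤ Real.log n / Real.log 2 := (le_div_iff₀ hlog2).2 hkL
    have h2' : (2:ℝ) ≤ 2 * Real.log n := by linarith
    calc (k : ℝ) + 2 ≤ Real.log n / Real.log 2 + 2 * Real.log n := by linarith
      _ = c₁ * Real.log n := by rw [hc₁def]; ring
  -- assemble
  have hstep1 : ((2:ℝ) ^ (k + 1)) ^ (β / 2) ≤ 2 ^ (β / 2) * (n:ℝ) ^ (β / 2) := by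
    have h1 : ((2:ℝ) ^ (k + 1)) ≤ 2 * n := by
      rw [pow_succ]
      nlinarith
    calc ((2:ℝ) ^ (k + 1)) ^ (β / 2) ≤ (2 * (n:ℝ)) ^ (β / 2) :=
        Real.rpow_le_rpow (by positivity) h1 (by linarith)
      _ = 2 ^ (β / 2) * (n:ℝ) ^ (β / 2) := Real.mul_rpow (by norm_num) hnpos.le
  have hstep2 : ((k : ℝ) + 2) ^ (2 + δ / 2) ≤ c₁ ^ (2 + δ / 2) * Real.log n ^ (2 + δ) := by
    calc ((k : ℝ) + 2) ^ (2 + δ / 2) ≤ (c₁ * Real.log n) ^ (2 + δ / 2) :=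
        Real.rpow_le_rpow (by positivity) hk2L (by linarith)
      _ = c₁ ^ (2 + δ / 2) * Real.log n ^ (2 + δ / 2) :=
        Real.mul_rpow hc₁.le (by linarith)
      _ ≤ c₁ ^ (2 + δ / 2) * Real.log n ^ (2 + δ) := by
        refine mul_le_mul_of_nonneg_left ?_ (Real.rpow_nonneg hc₁.le _)
        exact Real.rpow_le_rpow_of_exponent_le hL1 (by linarith)
  have hfact : ((k:ℝ) + 1 + 1) * t (k + 1)
      = ((2:ℝ) ^ (k + 1)) ^ (β / 2) * ((k : ℝ) + 2) ^ (2 + δ / 2) := by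
    rw [htdef]
    simp only
    push_cast
    rw [show (2 + δ / 2) = 1 + (1 + δ / 2) by ring,
      Real.rpow_add (by positivity : (0:ℝ) < (k:ℝ) + 2), Real.rpow_one,
      show (k:ℝ) + 1 + 1 = (k:ℝ) + 2 by ring]
    ring
  rw [Real.norm_eq_abs, Real.norm_eq_abs, hIcc]
  have hRHS : |(n : ℝ) ^ (β / 2) * Real.log n ^ (2 + δ)|
      = (n : ℝ) ^ (β / 2) * Real.log n ^ (2 + δ) := by
    refine abs_of_nonneg (mul_nonneg (Real.rpow_nonneg hnpos.le _)
      (Real.rpow_nonneg (by linarith) _))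
  rw [hRHS]
  calc |∑ i ∈ Finset.Ioc 0 n, V i ω| ≤ ((k:ℝ) + 1 + 1) * t (k + 1) := hchain
    _ = ((2:ℝ) ^ (k + 1)) ^ (β / 2) * ((k : ℝ) + 2) ^ (2 + δ / 2) := hfact
    _ ≤ (2 ^ (β / 2) * (n:ℝ) ^ (β / 2)) * (c₁ ^ (2 + δ / 2) * Real.log n ^ (2 + δ)) := by
        refine mul_le_mul hstep1 hstep2 (by positivity) (by positivity)
    _ = 2 ^ (β / 2) * c₁ ^ (2 + δ / 2) * ((n : ℝ) ^ (β / 2) * Real.log n ^ (2 + δ)) := by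
        ring
end

section
/- For every n ≥ 2 and x ∈ (0,1), the n-th cumulant of the Bernoulli B(1,x) law equals c_n(x) = x(1−x) Σ_{k=1}^{n−1} a_{k,n−1} x^{k−1}, where a_{k,n} = Σ_{j=0}^{k} (−1)^{j+1} binom(k,j) j^n. -/
/-- `a_{k,n} = Σ_{j=0}^{k} (−1)^{j+1} C(k,j) j^n`. -/
noncomputable def aCoef (k n : ℕ) : ℝ :=
  ∑ j ∈ Finset.range (k + 1), (-1 : ℝ) ^ (j + 1) * (Nat.choose k j : ℝ) * (j : ℝ) ^ n

open Finset

lemma choose_key (k j : ℕ) :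
    (j : ℝ) * (Nat.choose (k+1) j : ℝ) = (k+1 : ℝ) * (Nat.choose (k+1) j) - (k+1 : ℝ) * (Nat.choose k j) := by
  have h : j * Nat.choose (k+1) j + (k+1) * Nat.choose k j = (k+1) * Nat.choose (k+1) j := by
    cases j with
    | zero => simp
    | succ i =>
      rcases le_or_gt (i+1) (k+1) with h | h
      · have h1 : (k+1) * Nat.choose k i = Nat.choose (k+1) (i+1) * (i+1) :=
          Nat.add_one_mul_choose_eq k i
        have h2 : Nat.choose (k+1) (i+1) = Nat.choose k i + Nat.choose k (i+1) :=
          Nat.choose_succ_succ k i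
        nlinarith [h1, h2]
      · rw [Nat.choose_eq_zero_of_lt h, Nat.choose_eq_zero_of_lt (by omega)]
        simp
  have := congrArg (fun m : ℕ => (m : ℝ)) h
  push_cast at this
  linarith

lemma aCoef_succ (k n : ℕ) :
    aCoef (k+1) (n+1) = (k+1 : ℝ) * (aCoef (k+1) n - aCoef k n) := by
  have step : ∀ j ∈ range (k+2),
      (-1 : ℝ) ^ (j + 1) * (Nat.choose (k+1) j : ℝ) * (j : ℝ) ^ (n+1)
      = (k+1:ℝ) * ((-1 : ℝ) ^ (j + 1) * (Nat.choose (k+1) j : ℝ) * (j:ℝ) ^ n)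
        - (k+1:ℝ) * ((-1 : ℝ) ^ (j + 1) * (Nat.choose k j : ℝ) * (j:ℝ) ^ n) := by
    intro j _
    have := choose_key k j
    have hp : (j:ℝ)^(n+1) = (j:ℝ) * (j:ℝ)^n := by ring
    rw [hp]
    linear_combination ((-1:ℝ)^(j+1) * (j:ℝ)^n) * this
  calc aCoef (k+1) (n+1)
      = ∑ j ∈ range (k+2), ((k+1:ℝ) * ((-1 : ℝ) ^ (j + 1) * (Nat.choose (k+1) j : ℝ) * (j:ℝ) ^ n)
        - (k+1:ℝ) * ((-1 : ℝ) ^ (j + 1) * (Nat.choose k j : ℝ) * (j:ℝ) ^ n)) := by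
        rw [aCoef]; exact Finset.sum_congr rfl step
    _ = (k+1:ℝ) * (∑ j ∈ range (k+2), (-1 : ℝ) ^ (j + 1) * (Nat.choose (k+1) j : ℝ) * (j:ℝ) ^ n)
        - (k+1:ℝ) * (∑ j ∈ range (k+2), (-1 : ℝ) ^ (j + 1) * (Nat.choose k j : ℝ) * (j:ℝ) ^ n) := by
        rw [Finset.sum_sub_distrib, Finset.mul_sum, Finset.mul_sum]
    _ = (k+1 : ℝ) * (aCoef (k+1) n - aCoef k n) := by
        rw [Finset.sum_range_succ (fun j => (-1 : ℝ) ^ (j + 1) * (Nat.choose k j : ℝ) * (j:ℝ) ^ n)]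
        rw [Nat.choose_succ_self]
        rw [aCoef, aCoef]
        push_cast
        ring

lemma aCoef_zero_left (n : ℕ) (hn : 1 ≤ n) : aCoef 0 n = 0 := by
  rw [aCoef]
  simp [zero_pow (by omega : n ≠ 0)]

lemma aCoef_zero_right (k : ℕ) (hk : 1 ≤ k) : aCoef k 0 = 0 := by
  have h := Int.alternating_sum_range_choose (n := k)
  rw [if_neg (by omega : k ≠ 0)] at h
  have h' : ((∑ i ∈ range (k + 1), (-1 : ℤ) ^ i * (Nat.choose k i) : ℤ) : ℝ) = 0 := by
    rw [h]; norm_num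
  push_cast at h'
  rw [aCoef]
  have : ∀ j ∈ range (k+1), (-1 : ℝ) ^ (j + 1) * (Nat.choose k j : ℝ) * (j : ℝ) ^ 0
      = -((-1:ℝ)^j * (Nat.choose k j : ℝ)) := by
    intro j _; rw [pow_zero]; ring
  rw [Finset.sum_congr rfl this, Finset.sum_neg_distrib, h', neg_zero]

lemma aCoef_vanish : ∀ n k, n < k → aCoef k n = 0 := by
  intro n
  induction n with
  | zero => intro k hk; exact aCoef_zero_right k hk
  | succ n ih =>
    intro k hk
    obtain ⟨m, rfl⟩ : ∃ m, k = m + 1 := ⟨k - 1, by omega⟩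
    rw [aCoef_succ, ih (m+1) (by omega), ih m (by omega)]
    ring

lemma key_identity (n : ℕ) (hn : 1 ≤ n) (x : ℝ) :
    ∑ i ∈ range n, aCoef (i+1) n * ((i+1 : ℝ) * x ^ i - (i+2 : ℝ) * x ^ (i+1))
      = ∑ i ∈ range (n+1), aCoef (i+1) (n+1) * x ^ i := by
  have hr : ∑ i ∈ range (n+1), aCoef (i+1) (n+1) * x ^ i
      = ∑ i ∈ range (n+1), ((i+1:ℝ) * aCoef (i+1) n * x ^ i - (i+1:ℝ) * aCoef i n * x ^ i) := by
    refine Finset.sum_congr rfl fun i _ => ?_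
    rw [aCoef_succ]; ring
  rw [hr, Finset.sum_sub_distrib]
  rw [Finset.sum_range_succ (fun i => (i+1:ℝ) * aCoef (i+1) n * x ^ i),
    aCoef_vanish n (n+1) (by omega)]
  rw [Finset.sum_range_succ' (fun i => (i+1:ℝ) * aCoef i n * x ^ i) n]
  rw [aCoef_zero_left n hn]
  simp only [mul_zero, zero_mul, add_zero]
  rw [← Finset.sum_sub_distrib]
  refine Finset.sum_congr rfl fun i _ => ?_
  push_cast
  ring

lemma main_aux (c : ℕ → ℝ → ℝ)
    (hc1 : ∀ x : ℝ, c 1 x = x)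
    (hrec : ∀ n : ℕ, 1 ≤ n → ∀ x : ℝ, c (n + 1) x = x * (1 - x) * deriv (c n) x) :
    ∀ n, 1 ≤ n → ∀ x : ℝ, c (n+1) x = x * (1 - x) * ∑ i ∈ range n, aCoef (i+1) n * x ^ i := by
  intro n
  induction n with
  | zero => omega
  | succ n ih =>
    intro _ x
    rcases Nat.eq_zero_or_pos n with rfl | hn
    · rw [hrec 1 le_rfl x]
      have hceq : c 1 = fun y => y := funext hc1
      rw [hceq, deriv_id'']
      have : aCoef 1 1 = 1 := by
        rw [aCoef]
        rw [Finset.sum_range_succ, Finset.sum_range_one]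
        norm_num
      simp [this]
    · rw [hrec (n+1) (by omega) x]
      have hceq : c (n+1) = fun y => ∑ i ∈ range n, aCoef (i+1) n * (y ^ (i+1) - y ^ (i+2)) := by
        funext y
        rw [ih hn y, Finset.mul_sum]
        exact Finset.sum_congr rfl fun i _ => by ring
      rw [hceq]
      have hd : HasDerivAt (fun y : ℝ => ∑ i ∈ range n, aCoef (i+1) n * (y ^ (i+1) - y ^ (i+2)))
          (∑ i ∈ range n, aCoef (i+1) n * ((i+1 : ℝ) * x ^ i - (i+2 : ℝ) * x ^ (i+1))) x := by
        apply HasDerivAt.fun_sum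
        intro i _
        have h1 : HasDerivAt (fun y : ℝ => y ^ (i+1)) ((i+1 : ℝ) * x ^ i) x := by
          simpa using hasDerivAt_pow (i+1) x
        have h2 : HasDerivAt (fun y : ℝ => y ^ (i+2)) ((i+2 : ℝ) * x ^ (i+1)) x := by
          simpa using hasDerivAt_pow (i+2) x
        exact (h1.sub h2).const_mul _
      rw [hd.deriv, key_identity n hn x]

theorem bernoulli_cumulant_explicit (c : ℕ → ℝ → ℝ)
    (hc1 : ∀ x : ℝ, c 1 x = x)
    (hrec : ∀ n : ℕ, 1 ≤ n → ∀ x : ℝ, c (n + 1) x = x * (1 - x) * deriv (c n) x)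
    (n : ℕ) (hn : 2 ≤ n) (x : ℝ) (hx : x ∈ Set.Ioo (0:ℝ) 1) :
    c n x = x * (1 - x) * ∑ k ∈ Finset.Icc 1 (n - 1), aCoef k (n - 1) * x ^ (k - 1) := by
  obtain ⟨m, rfl⟩ : ∃ m, n = (m + 1) + 1 := ⟨n - 2, by omega⟩
  rw [main_aux c hc1 hrec (m+1) (by omega) x]
  congr 1
  rw [show (m + 1 + 1 : ℕ) - 1 = m + 1 by omega]
  rw [← Finset.Ico_add_one_right_eq_Icc, Finset.sum_Ico_eq_sum_range]
  rw [show (m + 1 + 1 : ℕ) - 1 = m + 1 by omega]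
  refine (Finset.sum_congr rfl fun i _ => ?_).symm
  rw [show (1 + i : ℕ) = i + 1 by omega, Nat.add_sub_cancel]
end
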